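/- Maximum principle for the fractional Laplacian: let Ω ⊂ ℝⁿ be a bounded domain and 0 < α < 2. Suppose u ∈ L_α(ℝⁿ) ∩ C^{1,1}_{loc}(Ω) is lower semicontinuous on the closure of Ω, (-Δ)^{α/2} u ≥ 0 in Ω, and u ≥ 0 in ℝⁿ \ Ω. Then u ≥ 0 in ℝⁿ. Moreover, if u(x₀) = 0 for some x₀ ∈ Ω, then u = 0 almost everywhere in ℝⁿ. -/

import Mathlib

open MeasureTheory Set Filter Topology

/-- A lower semicontinuous function on a nonempty compact set attains its minimum. -/
theorem lscMinAux19 {X : Type*} [TopologicalSpace X] {s : Set X} (hs : IsCompact s)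
    (hne : s.Nonempty) {f : X → ℝ} (hf : LowerSemicontinuousOn f s) :
    ∃ x ∈ s, ∀ y ∈ s, f x ≤ f y := by
  by_contra hcon
  push_neg at hcon
  have key : ∀ x ∈ s, ∃ (y : X) (V : Set X), y ∈ s ∧ V ∈ 𝓝 x ∧ ∀ z ∈ V ∩ s, f y < f z := by
    intro x hx
    obtain ⟨y, hy, hfy⟩ := hcon x hx
    have h2 := hf x hx (f y) hfy
    rw [eventually_nhdsWithin_iff] at h2
    obtain ⟨V, hVsub, hVopen, hxV⟩ := eventually_nhds_iff.mp h2
    exact ⟨y, V, hy, hVopen.mem_nhds hxV, fun z hz => hVsub z hz.1 hz.2⟩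
  choose! y V hy hV hVs using key
  obtain ⟨t, hts, hcover⟩ := hs.elim_nhds_subcover V (fun x hx => hV x hx)
  have htne : t.Nonempty := by
    obtain ⟨x, hx⟩ := hne
    obtain ⟨w, hw, -⟩ := mem_iUnion₂.mp (hcover hx)
    exact ⟨w, hw⟩
  obtain ⟨x₀, hx₀t, hx₀min⟩ := t.exists_min_image (fun x => f (y x)) htne
  have hyx₀s : y x₀ ∈ s := hy x₀ (hts x₀ hx₀t)
  obtain ⟨x₁, hx₁t, hx₁V⟩ := mem_iUnion₂.mp (hcover hyx₀s)
  have hlt : f (y x₁) < f (y x₀) := hVs x₁ (hts x₁ hx₁t) (y x₀) ⟨hx₁V, hyx₀s⟩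
  exact absurd (hx₀min x₁ hx₁t) (not_le.mpr hlt)

theorem measSetAux19 {n : ℕ} (x : EuclideanSpace ℝ (Fin n)) (ε : ℝ) :
    MeasurableSet {y : EuclideanSpace ℝ (Fin n) | ε ≤ ‖y - x‖} :=
  (isClosed_le continuous_const ((continuous_id.sub continuous_const).norm)).measurableSet

theorem invIntegrable19 {n : ℕ} {α : ℝ} (hα0 : 0 < α) (x : EuclideanSpace ℝ (Fin n))
    {ε : ℝ} (hε : 0 < ε) :
    IntegrableOn (fun y : EuclideanSpace ℝ (Fin n) => (‖x - y‖ ^ ((n : ℝ) + α))⁻¹)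
      {y : EuclideanSpace ℝ (Fin n) | ε ≤ ‖y - x‖} := by
  set p : ℝ := (n : ℝ) + α with hp
  have hp0 : 0 < p := by positivity
  have hnp : (Module.finrank ℝ (EuclideanSpace ℝ (Fin n)) : ℝ) < p := by
    rw [finrank_euclideanSpace_fin]; simp only [hp]; linarith
  set D : ℝ := (1 + ‖x‖) / ε + 1 with hD
  have hD0 : 0 < D := by positivity
  have hbound : ∀ y ∈ {y : EuclideanSpace ℝ (Fin n) | ε ≤ ‖y - x‖},
      ‖(‖x - y‖ ^ p)⁻¹‖ ≤ D ^ p * (1 + ‖y‖) ^ (-p) := by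
    intro y hy
    simp only [mem_setOf_eq] at hy
    have hr : ε ≤ ‖x - y‖ := by rwa [norm_sub_rev]
    have hr0 : 0 < ‖x - y‖ := lt_of_lt_of_le hε hr
    have h1 : 1 + ‖y‖ ≤ D * ‖x - y‖ := by
      have h2 : ‖y‖ ≤ ‖x‖ + ‖x - y‖ := by
        calc ‖y‖ = ‖x - (x - y)‖ := by rw [sub_sub_cancel]
        _ ≤ ‖x‖ + ‖x - y‖ := norm_sub_le _ _
      have h3 : (1 + ‖x‖) ≤ (1 + ‖x‖) / ε * ‖x - y‖ := by
        rw [div_mul_eq_mul_div, le_div_iff₀ hε]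
        have : 0 ≤ 1 + ‖x‖ := by positivity
        nlinarith
      calc 1 + ‖y‖ ≤ (1 + ‖x‖) + ‖x - y‖ := by linarith
      _ ≤ (1 + ‖x‖) / ε * ‖x - y‖ + 1 * ‖x - y‖ := by linarith
      _ = D * ‖x - y‖ := by ring
    have h4 : (1 + ‖y‖) ^ p ≤ D ^ p * ‖x - y‖ ^ p := by
      rw [← Real.mul_rpow hD0.le hr0.le]
      exact Real.rpow_le_rpow (by positivity) h1 hp0.le
    have h5 : (‖x - y‖ ^ p)⁻¹ ≤ D ^ p * ((1 + ‖y‖) ^ p)⁻¹ := by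
      rw [← one_div, ← div_eq_mul_inv, div_le_div_iff₀ (by positivity) (by positivity)]
      linarith
    rw [Real.norm_eq_abs, abs_of_nonneg (by positivity), Real.rpow_neg (by positivity)]
    exact h5
  refine ((integrable_one_add_norm hnp).const_mul (D ^ p)).integrableOn.mono' ?_ ?_
  · exact (Measurable.aestronglyMeasurable (by fun_prop))
  · exact (ae_restrict_iff' (measSetAux19 x ε)).mpr (Eventually.of_forall hbound)

theorem gIntegrable19 {n : ℕ} {α : ℝ} {u : EuclideanSpace ℝ (Fin n) → ℝ} (hmeas : Measurable u)
    (hLα : (∫⁻ x : EuclideanSpace ℝ (Fin n),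
      ENNReal.ofReal (|u x| / (1 + ‖x‖ ^ ((n : ℝ) + α)))) < ⊤) :
    Integrable (fun y : EuclideanSpace ℝ (Fin n) => |u y| / (1 + ‖y‖ ^ ((n : ℝ) + α))) := by
  have hm : Measurable (fun y : EuclideanSpace ℝ (Fin n) =>
      |u y| / (1 + ‖y‖ ^ ((n : ℝ) + α))) := by fun_prop
  refine ⟨hm.aestronglyMeasurable, ?_⟩
  rw [hasFiniteIntegral_iff_norm]
  have : ∀ y : EuclideanSpace ℝ (Fin n),
      ENNReal.ofReal ‖|u y| / (1 + ‖y‖ ^ ((n : ℝ) + α))‖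
        = ENNReal.ofReal (|u y| / (1 + ‖y‖ ^ ((n : ℝ) + α))) := by
    intro y
    congr 1
    rw [Real.norm_eq_abs, abs_of_nonneg]
    have : (0:ℝ) < 1 + ‖y‖ ^ ((n : ℝ) + α) := by positivity
    positivity
  simpa only [this] using hLα

theorem fIntegrable19 {n : ℕ} {α : ℝ} (hα0 : 0 < α) {u : EuclideanSpace ℝ (Fin n) → ℝ}
    (hmeas : Measurable u)
    (hLα : (∫⁻ x : EuclideanSpace ℝ (Fin n),
      ENNReal.ofReal (|u x| / (1 + ‖x‖ ^ ((n : ℝ) + α)))) < ⊤)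
    (x : EuclideanSpace ℝ (Fin n)) {ε : ℝ} (hε : 0 < ε) :
    IntegrableOn (fun y : EuclideanSpace ℝ (Fin n) =>
      (u x - u y) / ‖x - y‖ ^ ((n : ℝ) + α)) {y : EuclideanSpace ℝ (Fin n) | ε ≤ ‖y - x‖} := by
  set p : ℝ := (n : ℝ) + α with hp
  have hp0 : 0 < p := by positivity
  have part1 : IntegrableOn (fun y : EuclideanSpace ℝ (Fin n) => u x / ‖x - y‖ ^ p)
      {y : EuclideanSpace ℝ (Fin n) | ε ≤ ‖y - x‖} := by
    have := (invIntegrable19 hα0 x hε).const_mul (u x)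
    simpa only [div_eq_mul_inv, hp, IntegrableOn] using this
  set C : ℝ := ε ^ (-p) + (‖x‖ / ε + 1) ^ p with hC
  have part2 : IntegrableOn (fun y : EuclideanSpace ℝ (Fin n) => u y / ‖x - y‖ ^ p)
      {y : EuclideanSpace ℝ (Fin n) | ε ≤ ‖y - x‖} := by
    refine (((gIntegrable19 hmeas hLα).const_mul C).integrableOn).mono'
      (Measurable.aestronglyMeasurable (by fun_prop)) ?_
    refine (ae_restrict_iff' (measSetAux19 x ε)).mpr (Eventually.of_forall ?_)
    intro y hy
    simp only [mem_setOf_eq] at hy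
    have hr : ε ≤ ‖x - y‖ := by rwa [norm_sub_rev]
    have hr0 : 0 < ‖x - y‖ := lt_of_lt_of_le hε hr
    have h1 : 1 + ‖y‖ ^ p ≤ C * ‖x - y‖ ^ p := by
      have ha : (1 : ℝ) ≤ ε ^ (-p) * ‖x - y‖ ^ p := by
        rw [Real.rpow_neg hε.le, ← div_eq_inv_mul, le_div_iff₀ (by positivity)]
        rw [one_mul]
        exact Real.rpow_le_rpow hε.le hr hp0.le
      have hb : ‖y‖ ^ p ≤ (‖x‖ / ε + 1) ^ p * ‖x - y‖ ^ p := by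
        rw [← Real.mul_rpow (by positivity) hr0.le]
        refine Real.rpow_le_rpow (norm_nonneg _) ?_ hp0.le
        have h2 : ‖y‖ ≤ ‖x‖ + ‖x - y‖ := by
          calc ‖y‖ = ‖x - (x - y)‖ := by rw [sub_sub_cancel]
          _ ≤ ‖x‖ + ‖x - y‖ := norm_sub_le _ _
        have h3 : ‖x‖ ≤ ‖x‖ / ε * ‖x - y‖ := by
          rw [div_mul_eq_mul_div, le_div_iff₀ hε]
          have : 0 ≤ ‖x‖ := norm_nonneg _
          nlinarith
        calc ‖y‖ ≤ ‖x‖ + ‖x - y‖ := h2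
        _ ≤ ‖x‖ / ε * ‖x - y‖ + 1 * ‖x - y‖ := by linarith
        _ = (‖x‖ / ε + 1) * ‖x - y‖ := by ring
      calc 1 + ‖y‖ ^ p ≤ ε ^ (-p) * ‖x - y‖ ^ p + (‖x‖ / ε + 1) ^ p * ‖x - y‖ ^ p := by
            linarith
      _ = C * ‖x - y‖ ^ p := by ring
    have hden : (0:ℝ) < 1 + ‖y‖ ^ p := by positivity
    have hC0 : 0 < C := by
      have h5 : (0:ℝ) < ε ^ (-p) := Real.rpow_pos_of_pos hε _
      have h6 : (0:ℝ) ≤ (‖x‖ / ε + 1) ^ p := Real.rpow_nonneg (by positivity) _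
      rw [hC]; linarith
    rw [Real.norm_eq_abs, abs_div, abs_of_nonneg (Real.rpow_nonneg (norm_nonneg _) p)]
    have h4 : (‖x - y‖ ^ p)⁻¹ ≤ C * (1 + ‖y‖ ^ p)⁻¹ := by
      rw [← one_div, ← div_eq_mul_inv, div_le_div_iff₀ (by positivity) hden]
      linarith
    calc |u y| / ‖x - y‖ ^ p = |u y| * (‖x - y‖ ^ p)⁻¹ := div_eq_mul_inv _ _
    _ ≤ |u y| * (C * (1 + ‖y‖ ^ p)⁻¹) := by
        exact mul_le_mul_of_nonneg_left h4 (abs_nonneg _)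
    _ = C * (|u y| / (1 + ‖y‖ ^ p)) := by rw [div_eq_mul_inv]; ring
  have : (fun y : EuclideanSpace ℝ (Fin n) => (u x - u y) / ‖x - y‖ ^ p)
      = fun y => u x / ‖x - y‖ ^ p - u y / ‖x - y‖ ^ p := by
    funext y; rw [sub_div]
  rw [this]
  exact part1.sub part2

theorem invPos19 {n : ℕ} (hn : 1 ≤ n) {α : ℝ}
    (x : EuclideanSpace ℝ (Fin n)) {R : ℝ} (hR : 0 < R)
    (hInt : IntegrableOn (fun y : EuclideanSpace ℝ (Fin n) => (‖x - y‖ ^ ((n : ℝ) + α))⁻¹)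
      {y : EuclideanSpace ℝ (Fin n) | R ≤ ‖y - x‖}) :
    0 < ∫ y in {y : EuclideanSpace ℝ (Fin n) | R ≤ ‖y - x‖},
      (‖x - y‖ ^ ((n : ℝ) + α))⁻¹ := by
  set p : ℝ := (n : ℝ) + α with hp
  rw [setIntegral_pos_iff_support_of_nonneg_ae ?pos hInt]
  case pos =>
    refine Eventually.of_forall fun y => ?_
    have : (0:ℝ) ≤ ‖x - y‖ ^ p := Real.rpow_nonneg (norm_nonneg _) _
    positivity
  · set c : EuclideanSpace ℝ (Fin n) := (R + 2) • EuclideanSpace.single (⟨0, hn⟩ : Fin n) (1:ℝ)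
      with hc
    have hcnorm : ‖c‖ = R + 2 := by
      rw [hc, norm_smul, EuclideanSpace.norm_single, norm_one, mul_one, Real.norm_eq_abs,
        abs_of_pos (by linarith)]
    have hsub : Metric.ball (x + c) 1 ⊆
        (Function.support fun y : EuclideanSpace ℝ (Fin n) => (‖x - y‖ ^ p)⁻¹) ∩
          {y : EuclideanSpace ℝ (Fin n) | R ≤ ‖y - x‖} := by
      intro z hz
      rw [Metric.mem_ball, dist_eq_norm] at hz
      have hlow : R + 1 ≤ ‖z - x‖ := by
        have h1 : ‖c‖ - ‖z - (x + c)‖ ≤ ‖z - x‖ := by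
          have h2 : ‖c‖ = ‖(z - x) - (z - (x + c))‖ := by congr 1; abel
          calc ‖c‖ - ‖z - (x + c)‖ ≤ ‖(z - x) - (z - (x + c))‖ - ‖z - (x + c)‖ := by
                rw [← h2]
          _ ≤ ‖z - x‖ := by
                linarith [norm_sub_le (z - x) (z - (x + c))]
        linarith [hcnorm ▸ h1, hz.le]
      have hzx : R ≤ ‖z - x‖ := by linarith
      refine ⟨?_, hzx⟩
      have h0 : (0:ℝ) < ‖x - z‖ := by rw [norm_sub_rev]; linarith
      have : (0:ℝ) < (‖x - z‖ ^ p)⁻¹ := by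
        have := Real.rpow_pos_of_pos h0 p
        positivity
      exact Function.mem_support.mpr (ne_of_gt this)
    calc (0 : ENNReal) < volume (Metric.ball (x + c) 1) := Metric.measure_ball_pos _ _ one_pos
    _ ≤ _ := measure_mono hsub

/-- Monotonicity of the truncated integrals when the integrand is non-positive. -/
theorem Imono19 {n : ℕ} {α : ℝ} (hα0 : 0 < α) {u : EuclideanSpace ℝ (Fin n) → ℝ}
    (hmeas : Measurable u)
    (hLα : (∫⁻ x : EuclideanSpace ℝ (Fin n),
      ENNReal.ofReal (|u x| / (1 + ‖x‖ ^ ((n : ℝ) + α)))) < ⊤)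
    (x : EuclideanSpace ℝ (Fin n))
    (hnonpos : ∀ y, (u x - u y) / ‖x - y‖ ^ ((n : ℝ) + α) ≤ 0)
    {ε ε' : ℝ} (hε' : 0 < ε') (hle : ε' ≤ ε) :
    (∫ y in {y : EuclideanSpace ℝ (Fin n) | ε' ≤ ‖y - x‖},
        (u x - u y) / ‖x - y‖ ^ ((n : ℝ) + α)) ≤
      ∫ y in {y : EuclideanSpace ℝ (Fin n) | ε ≤ ‖y - x‖},
        (u x - u y) / ‖x - y‖ ^ ((n : ℝ) + α) := by
  have hint := (fIntegrable19 hα0 hmeas hLα x hε').neg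
  have hsub : {y : EuclideanSpace ℝ (Fin n) | ε ≤ ‖y - x‖} ⊆
      {y : EuclideanSpace ℝ (Fin n) | ε' ≤ ‖y - x‖} := fun y hy => le_trans hle hy
  have hmono := setIntegral_mono_set hint
    (Eventually.of_forall fun y => neg_nonneg.mpr (hnonpos y))
    (HasSubset.Subset.eventuallyLE hsub)
  simp only [Pi.neg_apply, integral_neg] at hmono
  linarith

/-- Maximum principle for the fractional Laplacian `(-Δ)^{α/2}`, `0 < α < 2`, on a bounded
domain `Ω ⊆ ℝⁿ`: if `u ∈ L_α(ℝⁿ) ∩ C^{1,1}_{loc}(Ω)` is lower semicontinuous on `closure Ω`,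
`(-Δ)^{α/2} u ≥ 0` in `Ω` (in the pointwise principal-value sense) and `u ≥ 0` outside `Ω`,
then `u ≥ 0` everywhere; moreover, if `u` vanishes at some point of `Ω`, then `u = 0` a.e. -/
theorem stmt_19 (n : ℕ) (hn : 1 ≤ n) (α : ℝ) (hα0 : 0 < α) (hα2 : α < 2)
    (Ω : Set (EuclideanSpace ℝ (Fin n))) (hopen : IsOpen Ω)
    (hbdd : Bornology.IsBounded Ω) (hconn : IsConnected Ω)
    (u : EuclideanSpace ℝ (Fin n) → ℝ) (hmeas : Measurable u)
    -- `u ∈ L_α(ℝⁿ)`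
    (hLα : (∫⁻ x : EuclideanSpace ℝ (Fin n),
      ENNReal.ofReal (|u x| / (1 + ‖x‖ ^ ((n : ℝ) + α)))) < ⊤)
    -- `u ∈ C^{1,1}_{loc}(Ω)`
    (hC11 : ∀ x ∈ Ω, ∃ ε > 0, Metric.ball x ε ⊆ Ω ∧
      DifferentiableOn ℝ u (Metric.ball x ε) ∧
      ∃ K : NNReal, LipschitzOnWith K (fderiv ℝ u) (Metric.ball x ε))
    -- `u` lower semicontinuous on `closure Ω`
    (hlsc : LowerSemicontinuousOn u (closure Ω))
    -- `(-Δ)^{α/2} u ≥ 0` in `Ω`: the principal value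
    -- `P.V. ∫ (u(x)-u(y))/|x-y|^{n+α} dy` exists and is nonnegative
    (hfrac : ∀ x ∈ Ω, ∃ L : ℝ, 0 ≤ L ∧
      Tendsto (fun ε : ℝ =>
          ∫ y in {y : EuclideanSpace ℝ (Fin n) | ε ≤ ‖y - x‖},
            (u x - u y) / ‖x - y‖ ^ ((n : ℝ) + α))
        (nhdsWithin 0 (Ioi 0)) (nhds L))
    -- `u ≥ 0` outside `Ω`
    (hout : ∀ x, x ∉ Ω → 0 ≤ u x) :
    (∀ x, 0 ≤ u x) ∧ (∀ x₀ ∈ Ω, u x₀ = 0 → ∀ᵐ x : EuclideanSpace ℝ (Fin n), u x = 0) := by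
  have hp0 : (0:ℝ) < (n : ℝ) + α := by positivity
  -- Part 1: u ≥ 0 everywhere
  have upos : ∀ x, 0 ≤ u x := by
    by_contra hcontra
    push_neg at hcontra
    obtain ⟨z, hz⟩ := hcontra
    have hzΩ : z ∈ Ω := by
      by_contra hzo
      exact absurd hz (not_lt.mpr (hout z hzo))
    have hcomp : IsCompact (closure Ω) :=
      Metric.isCompact_of_isClosed_isBounded isClosed_closure hbdd.closure
    obtain ⟨xm, hxmcl, hxmmin⟩ := lscMinAux19 hcomp ⟨z, subset_closure hzΩ⟩ hlsc
    have hm : u xm < 0 := lt_of_le_of_lt (hxmmin z (subset_closure hzΩ)) hz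
    have hxmΩ : xm ∈ Ω := by
      by_contra h
      exact absurd hm (not_lt.mpr (hout xm h))
    have hglob : ∀ y, u xm ≤ u y := by
      intro y
      by_cases hy : y ∈ Ω
      · exact hxmmin y (subset_closure hy)
      · exact hm.le.trans (hout y hy)
    have hnonpos : ∀ y, (u xm - u y) / ‖xm - y‖ ^ ((n : ℝ) + α) ≤ 0 := fun y =>
      div_nonpos_of_nonpos_of_nonneg (sub_nonpos.mpr (hglob y))
        (Real.rpow_nonneg (norm_nonneg _) _)
    obtain ⟨L, hL0, hLt⟩ := hfrac xm hxmΩ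
    obtain ⟨r, hr⟩ := hbdd.subset_closedBall xm
    set R : ℝ := max r 0 + 1 with hR
    have hR0 : 0 < R := by positivity
    have hRout : ∀ y : EuclideanSpace ℝ (Fin n), R ≤ ‖y - xm‖ → y ∉ Ω := by
      intro y hy hyΩ
      have h1 := hr hyΩ
      rw [Metric.mem_closedBall, dist_eq_norm] at h1
      have h2 : r ≤ max r 0 := le_max_left r 0
      linarith
    set cR : ℝ := ∫ y in {y : EuclideanSpace ℝ (Fin n) | R ≤ ‖y - xm‖},
      (‖xm - y‖ ^ ((n : ℝ) + α))⁻¹ with hcR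
    have hcRpos : 0 < cR := invPos19 hn xm hR0 (invIntegrable19 hα0 xm hR0)
    have hmain : ∀ ε ∈ Ioc (0:ℝ) R,
        (∫ y in {y : EuclideanSpace ℝ (Fin n) | ε ≤ ‖y - xm‖},
          (u xm - u y) / ‖xm - y‖ ^ ((n : ℝ) + α)) ≤ u xm * cR := by
      intro ε hε
      have step1 := Imono19 hα0 hmeas hLα xm hnonpos hε.1 hε.2
      have step2 : (∫ y in {y : EuclideanSpace ℝ (Fin n) | R ≤ ‖y - xm‖},
          (u xm - u y) / ‖xm - y‖ ^ ((n : ℝ) + α)) ≤ u xm * cR := by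
        have heq : u xm * cR = ∫ y in {y : EuclideanSpace ℝ (Fin n) | R ≤ ‖y - xm‖},
            u xm * (‖xm - y‖ ^ ((n : ℝ) + α))⁻¹ := (integral_const_mul _ _).symm
        rw [heq]
        refine setIntegral_mono_on (fIntegrable19 hα0 hmeas hLα xm hR0)
          ((invIntegrable19 hα0 xm hR0).const_mul (u xm)) (measSetAux19 xm R) ?_
        intro y hy
        simp only [mem_setOf_eq] at hy
        have hr0 : 0 < ‖xm - y‖ := by rw [norm_sub_rev]; linarith
        have hrp : 0 < ‖xm - y‖ ^ ((n : ℝ) + α) := Real.rpow_pos_of_pos hr0 _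
        have huy : 0 ≤ u y := hout y (hRout y hy)
        rw [← div_eq_mul_inv]
        gcongr
        linarith
      linarith
    have hLle : L ≤ u xm * cR := by
      refine le_of_tendsto hLt ?_
      filter_upwards [Ioc_mem_nhdsGT_of_mem (⟨le_refl (0:ℝ), hR0⟩ : (0:ℝ) ∈ Ico 0 R)]
        with ε hε using hmain ε hε
    have : u xm * cR < 0 := mul_neg_of_neg_of_pos hm hcRpos
    linarith
  refine ⟨upos, ?_⟩
  -- Part 2
  intro x₀ hx₀ hux₀
  obtain ⟨L, hL0, hLt⟩ := hfrac x₀ hx₀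
  have hnonpos : ∀ y, (u x₀ - u y) / ‖x₀ - y‖ ^ ((n : ℝ) + α) ≤ 0 := fun y =>
    div_nonpos_of_nonpos_of_nonneg (by rw [hux₀]; linarith [upos y])
      (Real.rpow_nonneg (norm_nonneg _) _)
  have hIzero : ∀ ε : ℝ, 0 < ε →
      (∫ y in {y : EuclideanSpace ℝ (Fin n) | ε ≤ ‖y - x₀‖},
        (u x₀ - u y) / ‖x₀ - y‖ ^ ((n : ℝ) + α)) = 0 := by
    intro ε hε
    have hle : (∫ y in {y : EuclideanSpace ℝ (Fin n) | ε ≤ ‖y - x₀‖},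
        (u x₀ - u y) / ‖x₀ - y‖ ^ ((n : ℝ) + α)) ≤ 0 :=
      setIntegral_nonpos (measSetAux19 x₀ ε) (fun y _ => hnonpos y)
    have hgeL : L ≤ ∫ y in {y : EuclideanSpace ℝ (Fin n) | ε ≤ ‖y - x₀‖},
        (u x₀ - u y) / ‖x₀ - y‖ ^ ((n : ℝ) + α) := by
      refine le_of_tendsto hLt ?_
      filter_upwards [Ioc_mem_nhdsGT_of_mem (⟨le_refl (0:ℝ), hε⟩ : (0:ℝ) ∈ Ico 0 ε)]
        with ε' hε' using Imono19 hα0 hmeas hLα x₀ hnonpos hε'.1 hε'.2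
    linarith
  have huzero : ∀ ε : ℝ, 0 < ε →
      ∀ᵐ y : EuclideanSpace ℝ (Fin n),
        y ∈ {y : EuclideanSpace ℝ (Fin n) | ε ≤ ‖y - x₀‖} → u y = 0 := by
    intro ε hε
    have hint := (fIntegrable19 hα0 hmeas hLα x₀ hε).neg
    have hiz : (∫ y in {y : EuclideanSpace ℝ (Fin n) | ε ≤ ‖y - x₀‖},
        -((u x₀ - u y) / ‖x₀ - y‖ ^ ((n : ℝ) + α))) = 0 := by
      rw [integral_neg, hIzero ε hε, neg_zero]
    have hzero := (setIntegral_eq_zero_iff_of_nonneg_ae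
      (Eventually.of_forall fun y => neg_nonneg.mpr (hnonpos y)) hint).mp hiz
    have hzero' := (ae_restrict_iff' (measSetAux19 x₀ ε)).mp hzero
    filter_upwards [hzero'] with y hy hyA
    have h := hy hyA
    simp only [Pi.zero_apply, neg_eq_zero] at h
    have hyA' : ε ≤ ‖y - x₀‖ := hyA
    have hr0 : 0 < ‖x₀ - y‖ := by rw [norm_sub_rev]; linarith
    have hrp : ‖x₀ - y‖ ^ ((n : ℝ) + α) ≠ 0 := ne_of_gt (Real.rpow_pos_of_pos hr0 _)
    rcases div_eq_zero_iff.mp h with h1 | h1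
    · rw [hux₀] at h1
      linarith
    · exact absurd h1 hrp
  have hae : ∀ᵐ y : EuclideanSpace ℝ (Fin n), ∀ k : ℕ,
      y ∈ {y : EuclideanSpace ℝ (Fin n) | 1 / ((k : ℝ) + 1) ≤ ‖y - x₀‖} → u y = 0 :=
    ae_all_iff.mpr fun k => huzero _ (by positivity)
  filter_upwards [hae] with y hy
  by_cases hyx : y = x₀
  · rw [hyx]; exact hux₀
  · have hd : 0 < ‖y - x₀‖ := by
      rw [norm_pos_iff]
      exact sub_ne_zero.mpr hyx
    obtain ⟨k, hk⟩ := exists_nat_one_div_lt hd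
    exact hy k (le_of_lt hk)
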